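/- arXiv:2307.09398 — 2 statements merged into one kernel-verified Lean document; each statement's English description precedes it below -/
import Mathlib

section
/- Consider the closed-loop system f on x = (δ, ζ, v_dc, i_d, i_q). Every equilibrium point (δ*, ζ*, v_dc*, i_d*, i_q*) of f (i.e. every point where f vanishes) satisfies: v_dc* = v_dcr; δ* = δ_r + 2πk for some integer k; i_d* = (μ v_dcr (R cos δ* − Lω₀ sin δ*) − R v_gd)/(R² + (Lω₀)²); i_q* = (μ v_dcr (Lω₀ cos δ* + R sin δ*) − Lω₀ v_gd)/(R² + (Lω₀)²); and ζ* = (−G_dc v_dcr − μ(i_d* cos δ* + i_q* sin δ*))/κ_i. -/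
open Real

/-- every equilibrium point of the closed-loop converter dynamics under
hybrid angle control has dc voltage equal to its reference, relative angle equal to
δ_r + 2πk for some integer k, and the stated closed-form dq currents and integrator state. -/
theorem stmt_1
    (Cdc L R Gdc κp κi κdc κac μ : ℝ)
    (hCdc : 0 < Cdc) (hL : 0 < L) (hR : 0 < R) (hGdc : 0 < Gdc)
    (hκp : 0 < κp) (hκi : 0 < κi) (hκdc : 0 < κdc) (hκac : 0 < κac) (hμ : 0 < μ)
    (ω₀ vgd vdcr δr : ℝ)
    (δs ζs vs ids iqs : ℝ)
    -- the five right-hand sides of the closed-loop ODE vanish at (δs, ζs, vs, ids, iqs)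
    (h1 : κdc * (vs - vdcr) - κac * Real.sin ((δs - δr) / 2) = 0)
    (h2 : vs - vdcr = 0)
    (h3 : -(κp * (vs - vdcr)) - κi * ζs - Gdc * vs
          - μ * (ids * Real.cos δs + iqs * Real.sin δs) = 0)
    (h4 : μ * vs * Real.cos δs - R * ids - L * ω₀ * iqs - vgd = 0)
    (h5 : μ * vs * Real.sin δs - R * iqs + L * ω₀ * ids = 0) :
    vs = vdcr ∧
    (∃ k : ℤ, δs = δr + 2 * Real.pi * (k : ℝ)) ∧
    ids = (μ * vdcr * (R * Real.cos δs - L * ω₀ * Real.sin δs) - R * vgd)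
            / (R ^ 2 + (L * ω₀) ^ 2) ∧
    iqs = (μ * vdcr * (L * ω₀ * Real.cos δs + R * Real.sin δs) - L * ω₀ * vgd)
            / (R ^ 2 + (L * ω₀) ^ 2) ∧
    ζs = (-(Gdc * vdcr) - μ * (ids * Real.cos δs + iqs * Real.sin δs)) / κi := by
  have hv : vs = vdcr := by linarith
  subst hv
  have hden : R ^ 2 + (L * ω₀) ^ 2 > 0 := by positivity
  have hsin : Real.sin ((δs - δr) / 2) = 0 := by
    have := h1; nlinarith [hκac]
  refine ⟨rfl, ?_, ?_, ?_, ?_⟩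
  · rcases Real.sin_eq_zero_iff.mp hsin with ⟨k, hk⟩
    exact ⟨k, by linarith [hk]⟩
  · field_simp
    linear_combination -(R * h4) + L * ω₀ * h5
  · field_simp
    linear_combination -(L * ω₀ * h4) - R * h5
  · field_simp
    linarith [h3]
end

section
/- Let κ_ac > 0 and δ_r be real, and let δ : [0, ∞) → ℝ be a differentiable function satisfying dδ/dt (t) = −κ_ac sin((δ(t) − δ_r)/2) for all t ≥ 0 with initial condition δ(0) ∈ (δ_r − 2π, δ_r + 2π). Then δ(t) ∈ (δ_r − 2π, δ_r + 2π) for all t ≥ 0 and δ(t) → δ_r as t → ∞. -/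
open Real Filter

lemma g_even (y : ℝ) : y * Real.sin (y / 2) = |y| * Real.sin (|y| / 2) := by
  rcases le_or_gt 0 y with h | h
  · rw [abs_of_nonneg h]
  · rw [abs_of_neg h]
    have : Real.sin (-y / 2) = - Real.sin (y / 2) := by
      rw [neg_div, Real.sin_neg]
    rw [this]; ring

lemma g_nonneg {y : ℝ} (h1 : -(2 * Real.pi) < y) (h2 : y < 2 * Real.pi) :
    0 ≤ y * Real.sin (y / 2) := by
  rw [g_even]
  have ha : 0 ≤ |y| := abs_nonneg y
  have hb : |y| < 2 * Real.pi := abs_lt.2 ⟨h1, h2⟩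
  have : 0 ≤ Real.sin (|y| / 2) := by
    apply Real.sin_nonneg_of_nonneg_of_le_pi
    · positivity
    · linarith
  positivity

/-- any differentiable solution of the reduced relative-angle dynamics
dδ/dt = −κ_ac sin((δ−δ_r)/2) on [0, ∞) starting in (δ_r − 2π, δ_r + 2π) stays in that
interval for all t ≥ 0 and converges to δ_r as t → ∞. -/
theorem stmt_7 (κac δr : ℝ) (hκac : 0 < κac)
    (δ : ℝ → ℝ)
    (hode : ∀ t : ℝ, 0 ≤ t →
      HasDerivAt δ (-(κac * Real.sin ((δ t - δr) / 2))) t)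
    (hinit : δ 0 ∈ Set.Ioo (δr - 2 * Real.pi) (δr + 2 * Real.pi)) :
    (∀ t : ℝ, 0 ≤ t → δ t ∈ Set.Ioo (δr - 2 * Real.pi) (δr + 2 * Real.pi)) ∧
    Tendsto δ atTop (nhds δr) := by
  have hπ : 0 < Real.pi := Real.pi_pos
  set x : ℝ → ℝ := fun t => δ t - δr with hxdef
  have hx : ∀ t : ℝ, 0 ≤ t → HasDerivAt x (-(κac * Real.sin (x t / 2))) t := by
    intro t ht
    exact (hode t ht).sub_const δr
  set V : ℝ → ℝ := fun t => (x t) ^ 2 with hVdef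
  have hV : ∀ t : ℝ, 0 ≤ t →
      HasDerivAt V (-(2 * κac * (x t * Real.sin (x t / 2)))) t := by
    intro t ht
    have := (hx t ht).fun_pow 2
    exact this.congr_deriv (by ring)
  have hVcont : ContinuousOn V (Set.Ici 0) := fun t ht =>
    ((hV t ht).continuousAt).continuousWithinAt
  set c : ℝ := (2 * Real.pi) ^ 2 with hcdef
  have hx0l : -(2 * Real.pi) < x 0 := by
    have := hinit.1; simp only [hxdef]; linarith
  have hx0r : x 0 < 2 * Real.pi := by
    have := hinit.2; simp only [hxdef]; linarith
  have hV0 : V 0 < c := by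
    have := sq_lt_sq' hx0l hx0r
    simpa [hVdef, hcdef] using this
  have hmem : ∀ t : ℝ, V t < c → -(2 * Real.pi) < x t ∧ x t < 2 * Real.pi := by
    intro t h
    simp only [hVdef, hcdef] at h
    constructor
    · nlinarith [sq_nonneg (x t + 2 * Real.pi), hπ]
    · nlinarith [sq_nonneg (x t - 2 * Real.pi), hπ]
  -- invariance
  have hinv : ∀ t : ℝ, 0 ≤ t → V t < c := by
    by_contra hcon
    push_neg at hcon
    obtain ⟨T0, hT0, hT0c⟩ := hcon
    set S : Set ℝ := Set.Ici (0:ℝ) ∩ V ⁻¹' Set.Ici c with hSdef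
    have hSne : S.Nonempty := ⟨T0, hT0, hT0c⟩
    have hSbdd : BddBelow S := ⟨0, fun t ht => ht.1⟩
    have hSclosed : IsClosed S :=
      hVcont.preimage_isClosed_of_isClosed isClosed_Ici isClosed_Ici
    set T : ℝ := sInf S with hTdef
    have hTS : T ∈ S := hSclosed.csInf_mem hSne hSbdd
    have hT0' : 0 ≤ T := hTS.1
    have hTc : c ≤ V T := hTS.2
    have hTpos : 0 < T := by
      rcases lt_or_eq_of_le hT0' with h | h
      · exact h
      · exact absurd hTc (not_le.mpr (h ▸ hV0))
    have hlt : ∀ t, 0 ≤ t → t < T → V t < c := by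
      intro t ht htT
      by_contra h
      push_neg at h
      exact absurd (csInf_le hSbdd ⟨ht, h⟩) (not_le.mpr htT)
    have hanti : AntitoneOn V (Set.Icc 0 T) := by
      apply antitoneOn_of_deriv_nonpos (convex_Icc 0 T)
        (hVcont.mono (Set.Icc_subset_Ici_self))
      · intro t ht
        rw [interior_Icc] at ht
        exact ((hV t ht.1.le).differentiableAt).differentiableWithinAt
      · intro t ht
        rw [interior_Icc] at ht
        rw [(hV t ht.1.le).deriv]
        have := hmem t (hlt t ht.1.le ht.2)
        have := g_nonneg this.1 this.2
        nlinarith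
    have := hanti (Set.left_mem_Icc.mpr hT0') (Set.right_mem_Icc.mpr hT0') hT0'
    linarith
  -- V is antitone on [0,∞)
  have hantiV : AntitoneOn V (Set.Ici 0) := by
    apply antitoneOn_of_deriv_nonpos (convex_Ici 0) hVcont
    · intro t ht
      rw [interior_Ici] at ht
      exact ((hV t ht.le).differentiableAt).differentiableWithinAt
    · intro t ht
      rw [interior_Ici] at ht
      rw [(hV t ht.le).deriv]
      have := hmem t (hinv t ht.le)
      have := g_nonneg this.1 this.2
      nlinarith
  -- limit of V
  set W : ℝ → ℝ := fun t => V (max t 0) with hWdef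
  have hWanti : Antitone W := by
    intro s t hst
    exact hantiV (Set.mem_Ici.mpr (le_max_right s 0)) (Set.mem_Ici.mpr (le_max_right t 0))
      (max_le_max hst le_rfl)
  have hWbdd : BddBelow (Set.range W) := ⟨0, by rintro _ ⟨t, rfl⟩; exact sq_nonneg _⟩
  set L : ℝ := ⨅ t, W t with hLdef
  have hWtend : Tendsto W atTop (nhds L) := tendsto_atTop_ciInf hWanti hWbdd
  have hVW : V =ᶠ[atTop] W := by
    filter_upwards [eventually_ge_atTop (0:ℝ)] with t ht
    simp [hWdef, max_eq_left ht]
  have hVtend : Tendsto V atTop (nhds L) := hWtend.congr' hVW.symm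
  have hLnonneg : 0 ≤ L := le_ciInf (fun t => sq_nonneg _)
  have hLle : ∀ t : ℝ, 0 ≤ t → L ≤ V t := by
    intro t ht
    have := ciInf_le hWbdd t
    simpa [hWdef, max_eq_left ht] using this
  have hVle0 : ∀ t : ℝ, 0 ≤ t → V t ≤ V 0 := fun t ht =>
    hantiV (Set.self_mem_Ici) (Set.mem_Ici.mpr ht) ht
  -- L = 0
  have hL0 : L = 0 := by
    by_contra hL
    have hLpos : 0 < L := lt_of_le_of_ne hLnonneg (Ne.symm hL)
    set a : ℝ := Real.sqrt L with hadef
    set b : ℝ := Real.sqrt (V 0) with hbdef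
    have hapos : 0 < a := Real.sqrt_pos.mpr hLpos
    have hab : a ≤ b := Real.sqrt_le_sqrt (hLle 0 le_rfl)
    have hblt : b < 2 * Real.pi := by
      have : b < Real.sqrt c := by
        apply Real.sqrt_lt_sqrt (sq_nonneg _) hV0
      rwa [hcdef, Real.sqrt_sq (by positivity)] at this
    -- min of g on [a,b]
    obtain ⟨y0, hy0K, hy0min⟩ := (isCompact_Icc (a := a) (b := b)).exists_isMinOn
      ⟨a, Set.left_mem_Icc.mpr hab⟩
      ((continuous_id.mul (Real.continuous_sin.comp (continuous_id.div_const 2))).continuousOn)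
    set m : ℝ := y0 * Real.sin (y0 / 2) with hmdef
    have hmpos : 0 < m := by
      have h1 : 0 < y0 := lt_of_lt_of_le hapos hy0K.1
      have h2 : y0 < 2 * Real.pi := lt_of_le_of_lt hy0K.2 hblt
      have : 0 < Real.sin (y0 / 2) :=
        Real.sin_pos_of_pos_of_lt_pi (by positivity) (by linarith)
      positivity
    have hgbound : ∀ t : ℝ, 0 ≤ t → m ≤ x t * Real.sin (x t / 2) := by
      intro t ht
      rw [g_even]
      have habs1 : a ≤ |x t| := by
        rw [hadef, ← Real.sqrt_sq_eq_abs]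
        exact Real.sqrt_le_sqrt (hLle t ht)
      have habs2 : |x t| ≤ b := by
        rw [hbdef, ← Real.sqrt_sq_eq_abs]
        exact Real.sqrt_le_sqrt (hVle0 t ht)
      have hzz := hy0min (⟨habs1, habs2⟩ : |x t| ∈ Set.Icc a b)
      simpa [hmdef] using hzz
    -- F t = V t + 2 κ m t is antitone on [0,∞)
    set F : ℝ → ℝ := fun t => V t + 2 * κac * m * t with hFdef
    have hF : ∀ t : ℝ, 0 ≤ t →
        HasDerivAt F (-(2 * κac * (x t * Real.sin (x t / 2))) + 2 * κac * m) t := by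
      intro t ht
      have h2 : HasDerivAt (fun s : ℝ => 2 * κac * m * s) (2 * κac * m) t := by
        simpa using (hasDerivAt_id t).const_mul (2 * κac * m)
      exact (hV t ht).add h2
    have hFanti : AntitoneOn F (Set.Ici 0) := by
      apply antitoneOn_of_deriv_nonpos (convex_Ici 0)
      · exact fun t ht => ((hF t ht).continuousAt).continuousWithinAt
      · intro t ht
        rw [interior_Ici] at ht
        exact ((hF t ht.le).differentiableAt).differentiableWithinAt
      · intro t ht
        rw [interior_Ici] at ht
        rw [(hF t ht.le).deriv]
        have := hgbound t ht.le
        nlinarith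
    have h2km : 0 < 2 * κac * m := by positivity
    have hV0nn : 0 ≤ V 0 := sq_nonneg _
    set Tb : ℝ := V 0 / (2 * κac * m) + 1 with hTbdef
    have hTbpos : 0 < Tb := by
      rw [hTbdef]
      have hq : 0 ≤ V 0 / (2 * κac * m) := div_nonneg hV0nn h2km.le
      linarith
    have hFle := hFanti Set.self_mem_Ici (Set.mem_Ici.mpr hTbpos.le) hTbpos.le
    have hVTb : V Tb ≤ V 0 - 2 * κac * m * Tb := by
      simp only [hFdef] at hFle
      linarith
    have heq : 2 * κac * m * Tb = V 0 + 2 * κac * m := by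
      rw [hTbdef]; field_simp
    have hLT := hLle Tb hTbpos.le
    nlinarith
  -- conclude convergence
  rw [hL0] at hVtend
  have hsqrt : Tendsto (fun t => Real.sqrt (V t)) atTop (nhds 0) := by
    have : Tendsto Real.sqrt (nhds 0) (nhds (Real.sqrt 0)) :=
      Real.continuous_sqrt.tendsto 0
    rw [Real.sqrt_zero] at this
    exact this.comp hVtend
  have habs : Tendsto (fun t => |x t|) atTop (nhds 0) := by
    refine hsqrt.congr (fun t => ?_)
    rw [hVdef, Real.sqrt_sq_eq_abs]
  have hxtend : Tendsto x atTop (nhds 0) := by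
    rw [← abs_zero (α := ℝ)] at habs
    exact tendsto_zero_iff_abs_tendsto_zero x |>.mpr (by simpa [Function.comp_def] using habs)
  have hδtend : Tendsto δ atTop (nhds δr) := by
    have := hxtend.add_const δr
    rw [zero_add] at this
    refine this.congr (fun t => ?_)
    simp [hxdef]
  refine ⟨fun t ht => ?_, hδtend⟩
  have := hmem t (hinv t ht)
  constructor
  · have := this.1; simp only [hxdef] at this; linarith
  · have := this.2; simp only [hxdef] at this; linarith
end
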